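/- Let V be a real vector space of dimension 2n with n ≥ 1, let ω be an alternating 2-form on V, and let ξ, η be linear functionals on V such that the alternating 2n-form ω^{n-1} ∧ ξ ∧ η is nonzero. Then ξ and η are linearly independent, the subspace D = ker ξ ∩ ker η has dimension 2n − 2, and the restriction of ω to D is a nondegenerate alternating 2-form on D. -/

import Mathlib

/-- The wedge product of two real-valued alternating forms, via `AlternatingMap.domCoprod`. -/
noncomputable def wedge {V : Type*} [AddCommGroup V] [Module ℝ V] {k l : ℕ}
    (f : V [⋀^Fin k]→ₗ[ℝ] ℝ) (g : V [⋀^Fin l]→ₗ[ℝ] ℝ) : V [⋀^Fin (k + l)]→ₗ[ℝ] ℝ :=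
  ((TensorProduct.lid ℝ ℝ).toLinearMap.compAlternatingMap (f.domCoprod g)).domDomCongr
    finSumFinEquiv

/-- The `k`-th wedge power `ω^k` of an alternating `2`-form `ω`. -/
noncomputable def wedgePow {V : Type*} [AddCommGroup V] [Module ℝ V]
    (ω : V [⋀^Fin 2]→ₗ[ℝ] ℝ) : (k : ℕ) → V [⋀^Fin (2 * k)]→ₗ[ℝ] ℝ
  | 0 => AlternatingMap.constOfIsEmpty ℝ V (Fin 0) 1
  | k + 1 => wedge (wedgePow ω k) ω

/-- A linear functional viewed as an alternating `1`-form. -/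
noncomputable def oneForm {V : Type*} [AddCommGroup V] [Module ℝ V]
    (ξ : V →ₗ[ℝ] ℝ) : V [⋀^Fin 1]→ₗ[ℝ] ℝ :=
  AlternatingMap.ofSubsingleton ℝ V ℝ (0 : Fin 1) ξ

open Module

lemma wedge_apply_zero {V : Type*} [AddCommGroup V] [Module ℝ V] {k l : ℕ}
    (f : V [⋀^Fin k]→ₗ[ℝ] ℝ) (g : V [⋀^Fin l]→ₗ[ℝ] ℝ) (u : Fin (k + l) → V)
    (h : ∀ σ : Equiv.Perm (Fin k ⊕ Fin l),
      f (fun i => u (finSumFinEquiv (σ (Sum.inl i)))) = 0 ∨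
      g (fun i => u (finSumFinEquiv (σ (Sum.inr i)))) = 0) :
    wedge f g u = 0 := by
  have key : (f.domCoprod g) (fun i => u (finSumFinEquiv i)) = 0 := by
    have : (f.domCoprod g) (fun i => u (finSumFinEquiv i)) =
        (∑ σ : Equiv.Perm.ModSumCongr (Fin k) (Fin l),
          AlternatingMap.domCoprod.summand f g σ) (fun i => u (finSumFinEquiv i)) := rfl
    rw [this, MultilinearMap.sum_apply]
    apply Finset.sum_eq_zero
    intro σ _
    induction σ using Quotient.inductionOn' with
    | h σ =>
      rw [AlternatingMap.domCoprod.summand_mk'']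
      simp only [MultilinearMap.smul_apply, MultilinearMap.domDomCongr_apply,
        MultilinearMap.domCoprod_apply, AlternatingMap.coe_multilinearMap]
      rcases h σ with h0 | h0
      · rw [h0, TensorProduct.zero_tmul, smul_zero]
      · rw [h0, TensorProduct.tmul_zero, smul_zero]
  show (TensorProduct.lid ℝ ℝ).toLinearMap ((f.domCoprod g) (fun i => u (finSumFinEquiv i))) = 0
  rw [key]
  exact LinearMap.map_zero _

lemma oneForm_apply {V : Type*} [AddCommGroup V] [Module ℝ V] (ξ : V →ₗ[ℝ] ℝ)
    (u : Fin 1 → V) : oneForm ξ u = ξ (u 0) := rfl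

lemma top_wedge_eq_zero {V : Type*} [AddCommGroup V] [Module ℝ V] [FiniteDimensional ℝ V]
    {q : ℕ} (β : V [⋀^Fin q]→ₗ[ℝ] ℝ) (ξ η : V →ₗ[ℝ] ℝ) (W : Submodule ℝ V)
    (hdim : finrank ℝ V = q + 2) (hW : q + 1 ≤ finrank ℝ W)
    (hξ : W ≤ LinearMap.ker ξ) (hη : W ≤ LinearMap.ker η) :
    wedge (wedge β (oneForm ξ)) (oneForm η) = 0 := by
  classical
  obtain ⟨C, hC⟩ := Submodule.exists_isCompl W
  have hsum : finrank ℝ W + finrank ℝ C = q + 2 := by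
    rw [Submodule.finrank_add_eq_of_isCompl hC, hdim]
  have hc1 : finrank ℝ C ≤ 1 := by omega
  set b : Basis (Fin (finrank ℝ W) ⊕ Fin (finrank ℝ C)) ℝ V :=
    ((finBasis ℝ W).prod (finBasis ℝ C)).map (Submodule.prodEquivOfIsCompl W C hC) with hb
  have hbW : ∀ i, b (Sum.inl i) ∈ W := by
    intro i
    have : b (Sum.inl i) = ((finBasis ℝ W) i : V) := by
      simp [hb, Basis.map_apply, Submodule.coe_prodEquivOfIsCompl']
    rw [this]; exact ((finBasis ℝ W) i).2
  refine Basis.ext_alternating b (fun v hv => ?_)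
  rw [AlternatingMap.zero_apply]
  apply wedge_apply_zero
  intro σ
  rcases hx : v (finSumFinEquiv (σ (Sum.inr 0))) with a | a
  · right
    rw [oneForm_apply]
    have := hbW a
    rw [← hx] at this
    exact hη this
  · left
    apply wedge_apply_zero
    intro τ
    rcases hx' : v (finSumFinEquiv (σ (Sum.inl (finSumFinEquiv (τ (Sum.inr 0)))))) with a' | a'
    · right
      rw [oneForm_apply]
      have := hbW a'
      rw [← hx'] at this
      exact hξ this
    · exfalso
      have hne : finSumFinEquiv (σ (Sum.inl (finSumFinEquiv (τ (Sum.inr 0))))) ≠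
          finSumFinEquiv (σ (Sum.inr 0)) := by
        intro hEq
        have := σ.injective (finSumFinEquiv.injective hEq)
        exact Sum.inl_ne_inr this
      have haa : a' ≠ a := by
        intro hEq
        exact hne (hv (by rw [hx', hx, hEq]))
      have h2 : ({a', a} : Finset (Fin (finrank ℝ C))).card = 2 := by
        rw [Finset.card_insert_of_notMem (by simp [haa]), Finset.card_singleton]
      have := Finset.card_le_univ ({a', a} : Finset (Fin (finrank ℝ C)))
      simp [h2] at this
      omega

/-- Let `V` be a real vector space of dimension `2n`, `n ≥ 1`, `ω` an
alternating `2`-form and `ξ`, `η` linear functionals on `V` such that the `2n`-form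
`ω^(n-1) ∧ ξ ∧ η` is nonzero.  Then `ξ` and `η` are linearly independent, the subspace
`D = ker ξ ⊓ ker η` has dimension `2n - 2`, and the restriction of `ω` to `D` is a
nondegenerate alternating `2`-form on `D`. -/
theorem symplectic_on_kernel_of_top_wedge_ne_zero
    {V : Type*} [AddCommGroup V] [Module ℝ V] [FiniteDimensional ℝ V]
    {n : ℕ} (hn : 1 ≤ n) (hdim : Module.finrank ℝ V = 2 * n)
    (ω : V [⋀^Fin 2]→ₗ[ℝ] ℝ) (ξ η : V →ₗ[ℝ] ℝ)
    (hne : wedge (wedge (wedgePow ω (n - 1)) (oneForm ξ)) (oneForm η) ≠ 0) :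
    LinearIndependent ℝ ![ξ, η] ∧
    Module.finrank ℝ ↥(LinearMap.ker ξ ⊓ LinearMap.ker η) = 2 * n - 2 ∧
    ∀ v ∈ LinearMap.ker ξ ⊓ LinearMap.ker η, v ≠ 0 →
      ∃ w ∈ LinearMap.ker ξ ⊓ LinearMap.ker η, ω ![v, w] ≠ 0 := by
  classical
  -- rank-nullity for functionals
  have hker1 : ∀ φ : V →ₗ[ℝ] ℝ, 2 * n - 1 ≤ finrank ℝ (LinearMap.ker φ) := by
    intro φ
    have h1 := LinearMap.finrank_range_add_finrank_ker φ
    have h2 : finrank ℝ (LinearMap.range φ) ≤ 1 := by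
      have := Submodule.finrank_le (LinearMap.range φ)
      simpa using this
    rw [hdim] at h1
    omega
  -- Part 1: linear independence
  have hind : LinearIndependent ℝ ![ξ, η] := by
    by_contra hdep
    rw [LinearIndependent.pair_iff] at hdep
    push_neg at hdep
    obtain ⟨s, t, hst, hstne⟩ := hdep
    have key : ∃ W : Submodule ℝ V, (2 * (n - 1) + 1 ≤ finrank ℝ W) ∧
        W ≤ LinearMap.ker ξ ∧ W ≤ LinearMap.ker η := by
      by_cases hs0 : s = 0
      case pos =>
        have ht : t ≠ 0 := hstne hs0
        refine ⟨LinearMap.ker ξ, by have := hker1 ξ; omega, le_rfl, ?_⟩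
        intro x hx
        have hx' : ξ x = 0 := hx
        have := LinearMap.congr_fun hst x
        simp only [LinearMap.add_apply, LinearMap.smul_apply, smul_eq_mul,
          LinearMap.zero_apply, hx', mul_zero, zero_add] at this
        have : η x = 0 := by
          rcases mul_eq_zero.mp this with h | h
          · exact absurd h ht
          · exact h
        exact this
      case neg =>
        have hs : s ≠ 0 := hs0
        refine ⟨LinearMap.ker η, by have := hker1 η; omega, ?_, le_rfl⟩
        intro x hx
        have hx' : η x = 0 := hx
        have := LinearMap.congr_fun hst x
        simp only [LinearMap.add_apply, LinearMap.smul_apply, smul_eq_mul,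
          LinearMap.zero_apply, hx', mul_zero, add_zero] at this
        have : ξ x = 0 := by
          rcases mul_eq_zero.mp this with h | h
          · exact absurd h hs
          · exact h
        exact this
    obtain ⟨W, h1, h2, h3⟩ := key
    exact hne (top_wedge_eq_zero _ ξ η W (by rw [hdim]; omega) h1 h2 h3)
  have hpair := LinearIndependent.pair_iff.mp hind
  -- Part 2: dimension of the kernel intersection
  have hξ0 : ξ ≠ 0 := by
    have := hind.ne_zero 0
    simpa using this
  obtain ⟨u, hu⟩ : ∃ u, ξ u ≠ 0 := by
    by_contra h
    push_neg at h
    exact hξ0 (LinearMap.ext fun x => by simp [h x])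
  obtain ⟨w, hw1, hw2⟩ : ∃ w, ξ w = 0 ∧ η w ≠ 0 := by
    have hne' : η - (η u / ξ u) • ξ ≠ 0 := by
      intro h0
      have h1 := hpair (η u / ξ u) (-1)
        (by rw [show (η u / ξ u) • ξ + (-1 : ℝ) • η = -(η - (η u / ξ u) • ξ) by module,
          h0, neg_zero])
      norm_num at h1
    obtain ⟨v0, hv0⟩ : ∃ v0, (η - (η u / ξ u) • ξ) v0 ≠ 0 := by
      by_contra h
      push_neg at h
      exact hne' (LinearMap.ext fun x => by simp [h x])
    simp only [LinearMap.sub_apply, LinearMap.smul_apply, smul_eq_mul] at hv0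
    refine ⟨v0 - (ξ v0 / ξ u) • u, ?_, ?_⟩
    · simp only [map_sub, map_smul, smul_eq_mul]
      field_simp
      ring
    · simp only [map_sub, map_smul, smul_eq_mul]
      intro h
      apply hv0
      have : ξ v0 / ξ u * η u = η u / ξ u * ξ v0 := by
        field_simp
      rw [this] at h
      linarith
  obtain ⟨u', hu'1, hu'2⟩ : ∃ u', η u' = 0 ∧ ξ u' ≠ 0 := by
    refine ⟨u - (η u / η w) • w, ?_, ?_⟩
    · simp only [map_sub, map_smul, smul_eq_mul]
      field_simp
      ring
    · simp only [map_sub, map_smul, smul_eq_mul, hw1, mul_zero, sub_zero]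
      exact hu
  have hsurj : Function.Surjective (ξ.prod η) := by
    intro p
    refine ⟨(p.1 / ξ u') • u' + (p.2 / η w) • w, ?_⟩
    have e1 : ξ ((p.1 / ξ u') • u' + (p.2 / η w) • w) = p.1 := by
      simp only [map_add, map_smul, smul_eq_mul, hw1, mul_zero, add_zero]
      field_simp
    have e2 : η ((p.1 / ξ u') • u' + (p.2 / η w) • w) = p.2 := by
      simp only [map_add, map_smul, smul_eq_mul, hu'1, mul_zero, zero_add]
      field_simp
    exact Prod.ext (by simpa using e1) (by simpa using e2)
  have hrank : finrank ℝ ↥(LinearMap.ker ξ ⊓ LinearMap.ker η) = 2 * n - 2 := by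
    have hker := LinearMap.finrank_range_add_finrank_ker (ξ.prod η)
    rw [LinearMap.ker_prod, LinearMap.range_eq_top.mpr hsurj, finrank_top] at hker
    have h2 : finrank ℝ (ℝ × ℝ) = 2 := by simp
    rw [h2, hdim] at hker
    omega
  refine ⟨hind, hrank, ?_⟩
  -- Part 3: nondegeneracy
  intro v hvmem hv0
  by_contra hcon
  push_neg at hcon
  apply hne
  have hfin2 : ∀ (g : Fin 2 → V), g = ![g 0, g 1] := by
    intro g; funext i; fin_cases i <;> simp
  have hskew : ∀ a b : V, ω ![b, a] = - ω ![a, b] := by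
    intro a b
    have h1 := ω.map_swap (v := ![a, b]) (show (0 : Fin 2) ≠ 1 by decide)
    have h2 : (![a, b] ∘ Equiv.swap (0 : Fin 2) 1) = ![b, a] := by
      funext i; fin_cases i <;> simp [Equiv.swap_apply_left, Equiv.swap_apply_right]
    rwa [h2] at h1
  set D := LinearMap.ker ξ ⊓ LinearMap.ker η with hD
  -- key induction lemma
  have hM : ∀ (k : ℕ) (u : Fin (2 * k) → V), (∀ i, u i ∈ D) → (∃ i, u i = v) →
      wedgePow ω k u = 0 := by
    intro k
    induction k with
    | zero =>
      intro u _ hex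
      obtain ⟨i, _⟩ := hex
      exact i.elim0
    | succ k ih =>
      intro u hmem hex
      obtain ⟨i₀, hi₀⟩ := hex
      show wedge (wedgePow ω k) ω u = 0
      apply wedge_apply_zero
      intro σ
      obtain ⟨x, hxeq⟩ := (σ.trans finSumFinEquiv).surjective i₀
      rcases x with a | a
      · left
        exact ih _ (fun i => hmem _) ⟨a, (congrArg u (show finSumFinEquiv (σ (Sum.inl a)) = i₀ from by simpa using hxeq)).trans hi₀⟩
      · right
        have hmm0 : u (finSumFinEquiv (σ (Sum.inr 0))) ∈ D := hmem _
        have hmm1 : u (finSumFinEquiv (σ (Sum.inr 1))) ∈ D := hmem _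
        have hva : u (finSumFinEquiv (σ (Sum.inr a))) = v :=
          (congrArg u (show finSumFinEquiv (σ (Sum.inr a)) = i₀ from by simpa using hxeq)).trans hi₀
        refine Eq.trans (congrArg (⇑ω) (hfin2 (fun i => u (finSumFinEquiv (σ (Sum.inr i)))))) ?_
        show ω ![u (finSumFinEquiv (σ (Sum.inr 0))), u (finSumFinEquiv (σ (Sum.inr 1)))] = 0
        have h01 : a = 0 ∨ a = 1 := by
          rcases a with ⟨av, hav⟩
          interval_cases av
          · exact Or.inl (Fin.ext (by simp))
          · exact Or.inr (Fin.ext (by simp))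
        rcases h01 with rfl | rfl
        · rw [hva]
          exact hcon _ hmm1
        · rw [hva, hskew, hcon _ hmm0, neg_zero]
  -- adapted basis for V: v, rest of D, complement of D
  set v' : ↥D := ⟨v, hvmem⟩ with hv'
  have hv'ne : v' ≠ 0 := fun h => hv0 (by simpa [hv'] using congrArg Subtype.val h)
  have hli : LinearIndependent ℝ ![v'] := linearIndependent_unique_iff.mpr (by simpa using hv'ne)
  set L : Submodule ℝ ↥D := Submodule.span ℝ (Set.range ![v']) with hL
  obtain ⟨C₁, hC₁⟩ := Submodule.exists_isCompl L
  obtain ⟨C, hC⟩ := Submodule.exists_isCompl D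
  set bL : Basis (Fin 1) ℝ ↥L := Basis.span hli with hbL
  set bD : Basis (Fin 1 ⊕ Fin (finrank ℝ C₁)) ℝ ↥D :=
    (bL.prod (finBasis ℝ C₁)).map (Submodule.prodEquivOfIsCompl L C₁ hC₁) with hbD
  set b : Basis ((Fin 1 ⊕ Fin (finrank ℝ C₁)) ⊕ Fin (finrank ℝ C)) ℝ V :=
    (bD.prod (finBasis ℝ C)).map (Submodule.prodEquivOfIsCompl D C hC) with hbb
  have hbmem : ∀ x, b (Sum.inl x) = ((bD x : ↥D) : V) := by
    intro x
    simp [hbb, Basis.map_apply, Submodule.coe_prodEquivOfIsCompl']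
  have hbD' : ∀ x, b (Sum.inl x) ∈ D := fun x => by rw [hbmem]; exact (bD x).2
  have hbv : b (Sum.inl (Sum.inl 0)) = v := by
    rw [hbmem]
    have h1 : bD (Sum.inl 0) = v' := by
      simp only [hbD, hbL, Basis.map_apply, Basis.prod_apply, Sum.elim_inl,
        Function.comp_apply, LinearMap.coe_inl, Submodule.coe_prodEquivOfIsCompl',
        ZeroMemClass.coe_zero, add_zero]
      rw [Basis.span_apply]
      simp
    rw [h1]
  have hcnt1 : 1 + finrank ℝ C₁ = 2 * n - 2 := by
    have h1 : finrank ℝ ↥L = 1 := by rw [finrank_eq_card_basis bL]; simp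
    have h2 := Submodule.finrank_add_eq_of_isCompl hC₁
    rw [h1, hrank] at h2
    exact h2
  have hcntC : finrank ℝ C = 2 := by
    have h2 := Submodule.finrank_add_eq_of_isCompl hC
    rw [hrank, hdim] at h2
    omega
  refine Basis.ext_alternating b (fun w hw => ?_)
  rw [AlternatingMap.zero_apply]
  apply wedge_apply_zero
  intro σ
  rcases h1 : w (finSumFinEquiv (σ (Sum.inr 0))) with y | a
  · right
    rw [oneForm_apply]
    have hmem := hbD' y
    rw [← h1] at hmem
    exact (Submodule.mem_inf.mp hmem).2
  · left
    apply wedge_apply_zero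
    intro τ
    rcases h2 : w (finSumFinEquiv (σ (Sum.inl (finSumFinEquiv (τ (Sum.inr 0)))))) with y' | a'
    · right
      rw [oneForm_apply]
      have hmem := hbD' y'
      rw [← h2] at hmem
      exact (Submodule.mem_inf.mp hmem).1
    · left
      set ψ : Fin (2 * (n - 1)) → Fin (2 * (n - 1) + 1 + 1) :=
        fun i => finSumFinEquiv (σ (Sum.inl (finSumFinEquiv (τ (Sum.inl i))))) with hψ
      -- distinctness of the three kinds of indices
      have hne12 : finSumFinEquiv (σ (Sum.inl (finSumFinEquiv (τ (Sum.inr 0))))) ≠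
          finSumFinEquiv (σ (Sum.inr 0)) := by
        intro hEq
        exact Sum.inl_ne_inr (σ.injective (finSumFinEquiv.injective hEq))
      have hψne1 : ∀ i, ψ i ≠ finSumFinEquiv (σ (Sum.inr 0)) := by
        intro i hEq
        exact Sum.inl_ne_inr (σ.injective (finSumFinEquiv.injective hEq))
      have hψne2 : ∀ i, ψ i ≠
          finSumFinEquiv (σ (Sum.inl (finSumFinEquiv (τ (Sum.inr 0))))) := by
        intro i hEq
        exact Sum.inl_ne_inr (τ.injective (finSumFinEquiv.injective
          (Sum.inl_injective (σ.injective (finSumFinEquiv.injective hEq)))))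
      have haa' : a ≠ a' := by
        intro hEq
        apply hne12
        exact hw (by rw [h2, h1, hEq])
      have hsub : ∀ i, ∃ y, w (ψ i) = Sum.inl y := by
        intro i
        rcases h3 : w (ψ i) with y | a''
        · exact ⟨y, rfl⟩
        · exfalso
          have h4 : a'' ≠ a := by
            intro hEq
            exact hψne1 i (hw (by rw [h3, h1, hEq]))
          have h5 : a'' ≠ a' := by
            intro hEq
            exact hψne2 i (hw (by rw [h3, h2, hEq]))
          have hcard3 : ({a'', a', a} : Finset (Fin (finrank ℝ C))).card = 3 := by
            rw [Finset.card_insert_of_notMem (by simp [h5, h4]),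
              Finset.card_insert_of_notMem (by simp [haa'.symm]), Finset.card_singleton]
          have := Finset.card_le_univ ({a'', a', a} : Finset (Fin (finrank ℝ C)))
          rw [hcard3] at this
          simp [hcntC] at this
      have hallmem : ∀ i, b (w (ψ i)) ∈ D := by
        intro i
        obtain ⟨y, hy⟩ := hsub i
        have := hbD' y
        rw [← hy] at this
        exact this
      have hψinj : Function.Injective ψ := by
        intro i j h
        exact Sum.inl_injective (τ.injective (finSumFinEquiv.injective
          (Sum.inl_injective (σ.injective (finSumFinEquiv.injective h)))))
      have hexv : ∃ i, w (ψ i) = Sum.inl (Sum.inl 0) := by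
        classical
        have hinj : Function.Injective (fun i => w (ψ i)) :=
          fun i j h => hψinj (hw h)
        have hscard : (Finset.image (fun i => w (ψ i)) Finset.univ).card = 2 * (n - 1) := by
          rw [Finset.card_image_of_injective _ hinj, Finset.card_univ, Fintype.card_fin]
        have htcard : (Finset.image (Sum.inl : (Fin 1 ⊕ Fin (finrank ℝ C₁)) →
            (Fin 1 ⊕ Fin (finrank ℝ C₁)) ⊕ Fin (finrank ℝ C)) Finset.univ).card
            = 2 * (n - 1) := by
          rw [Finset.card_image_of_injective _ Sum.inl_injective, Finset.card_univ]
          simp only [Fintype.card_sum, Fintype.card_fin]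
          omega
        have hst : (Finset.image (fun i => w (ψ i)) Finset.univ) ⊆
            (Finset.image Sum.inl Finset.univ) := by
          intro z hz
          obtain ⟨i, _, hi⟩ := Finset.mem_image.mp hz
          obtain ⟨y, hy⟩ := hsub i
          rw [← hi, hy]
          exact Finset.mem_image_of_mem _ (Finset.mem_univ _)
        have heq := Finset.eq_of_subset_of_card_le hst (by omega)
        have hmemt : Sum.inl (Sum.inl 0) ∈ (Finset.image (fun i => w (ψ i)) Finset.univ) := by
          rw [heq]
          exact Finset.mem_image_of_mem _ (Finset.mem_univ _)
        obtain ⟨i, _, hi⟩ := Finset.mem_image.mp hmemt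
        exact ⟨i, hi⟩
      obtain ⟨i₁, hi₁⟩ := hexv
      show wedgePow ω (n - 1) (fun i => b (w (ψ i))) = 0
      refine hM (n - 1) _ hallmem ⟨i₁, ?_⟩
      rw [hi₁, hbv]
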